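/- The Farey map is topologically conjugate to the tent map: there exists a homeomorphism h : [0,1] → [0,1] with h(0) = 0 and h(1) = 1 such that h(F(x)) = Tent(h(x)) for all x ∈ [0,1], where Tent(x) = 2x for x ∈ [0,1/2] and Tent(x) = 2 − 2x for x ∈ [1/2,1]. -/

import Mathlib

/-- The Farey map `F : [0,1] → [0,1]`: `F x = x/(1-x)` for `x ≤ 1/2` and
`F x = (1-x)/x` for `x ≥ 1/2`. -/
noncomputable def fareyMap : ℝ → ℝ := fun x => if x ≤ 1 / 2 then x / (1 - x) else (1 - x) / x

/-- The tent map `Tent : [0,1] → [0,1]`: `Tent x = 2x` for `x ≤ 1/2` and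
`Tent x = 2 - 2x` for `x ≥ 1/2`. -/
noncomputable def tentMap : ℝ → ℝ := fun x => if x ≤ 1 / 2 then 2 * x else 2 - 2 * x

lemma farey_left {x : ℝ} (hx : x ≤ 1/2) : fareyMap x = x / (1 - x) := by
  simp only [fareyMap, if_pos hx]

lemma farey_right {x : ℝ} (hx : 1/2 ≤ x) : fareyMap x = (1 - x) / x := by
  rcases eq_or_lt_of_le hx with h | h
  · rw [fareyMap, if_pos h.symm.le, ← h]; norm_num
  · rw [fareyMap]; simp only [if_neg (not_le.mpr h)]

lemma farey_mapsTo {x : ℝ} (hx : x ∈ Set.Icc (0:ℝ) 1) : fareyMap x ∈ Set.Icc (0:ℝ) 1 := by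
  obtain ⟨h0, h1⟩ := hx
  rcases le_or_gt x (1/2) with h | h
  · rw [farey_left h]
    constructor
    · apply div_nonneg h0; linarith
    · rw [div_le_one (by linarith)]; linarith
  · rw [farey_right h.le]
    constructor
    · apply div_nonneg <;> linarith
    · rw [div_le_one (by linarith)]; linarith

lemma continuous_fareyMap : Continuous fareyMap := by
  have : fareyMap = fun x => if x ≤ 1/2 then x / max (1 - x) (1/2) else (1 - x) / max x (1/2) := by
    funext x
    by_cases h : x ≤ 1/2
    · simp only [fareyMap, if_pos h, max_eq_left (by linarith : (1:ℝ)/2 ≤ 1 - x)]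
    · simp only [fareyMap, if_neg h, max_eq_left (by linarith : (1:ℝ)/2 ≤ x)]
  rw [this]
  apply Continuous.if_le
  · exact continuous_id.div (by continuity) (fun x => by positivity)
  · exact (continuous_const.sub continuous_id).div (by continuity) (fun x => by positivity)
  · exact continuous_id
  · exact continuous_const
  · intro x hx; rw [hx]; norm_num

lemma continuous_tentMap : Continuous tentMap := by
  apply Continuous.if_le (by continuity) (by continuity) continuous_id continuous_const
  intro x hx; simp only [id] at hx; rw [hx]; norm_num

lemma farey_mono : MonotoneOn fareyMap (Set.Iic (1/2 : ℝ)) := by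
  intro x hx y hy hxy
  simp only [Set.mem_Iic] at hx hy
  rw [farey_left hx, farey_left hy]
  rw [div_le_div_iff₀ (by linarith) (by linarith)]
  nlinarith

lemma farey_anti : AntitoneOn fareyMap (Set.Ici (1/2 : ℝ)) := by
  intro x hx y hy hxy
  simp only [Set.mem_Ici] at hx hy
  rw [farey_right hx, farey_right hy]
  rw [div_le_div_iff₀ (by linarith) (by linarith)]
  nlinarith

noncomputable def fhSeq : ℕ → ℝ → ℝ
  | 0 => fun x => x
  | n + 1 => fun x =>
      if x ≤ 1/2 then fhSeq n (fareyMap x) / 2 else 1 - fhSeq n (fareyMap x) / 2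

lemma fhSeq_pkg (n : ℕ) :
    fhSeq n 0 = 0 ∧ fhSeq n 1 = 1 ∧ Continuous (fhSeq n) ∧ Monotone (fhSeq n) := by
  induction n with
  | zero => exact ⟨rfl, rfl, continuous_id, monotone_id⟩
  | succ n ih =>
    obtain ⟨h0, h1, hc, hm⟩ := ih
    have hF0 : fareyMap 0 = 0 := by rw [farey_left (by norm_num)]; norm_num
    have hF1 : fareyMap 1 = 0 := by rw [farey_right (by norm_num)]; norm_num
    have hFhalf : fareyMap (1/2 : ℝ) = 1 := by rw [farey_left le_rfl]; norm_num
    -- bound: for x ≤ 1/2, fareyMap x ≤ 1 ; for x ≥ 1/2, fareyMap x ≤ 1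
    have hFle1_left : ∀ x : ℝ, x ≤ 1/2 → fareyMap x ≤ 1 := by
      intro x hx
      rw [farey_left hx, div_le_one (by linarith)]; linarith
    have hFle1_right : ∀ x : ℝ, 1/2 ≤ x → fareyMap x ≤ 1 := by
      intro x hx
      rw [farey_right hx, div_le_one (by linarith)]; linarith
    refine ⟨?_, ?_, ?_, ?_⟩
    · show (if (0:ℝ) ≤ 1/2 then _ else _) = 0
      rw [if_pos (by norm_num : (0:ℝ) ≤ 1/2), hF0, h0]; norm_num
    · show (if (1:ℝ) ≤ 1/2 then _ else _) = 1
      rw [if_neg (by norm_num : ¬ (1:ℝ) ≤ 1/2), hF1, h0]; norm_num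
    · apply Continuous.if_le
      · exact (hc.comp continuous_fareyMap).div_const 2
      · exact continuous_const.sub ((hc.comp continuous_fareyMap).div_const 2)
      · exact continuous_id
      · exact continuous_const
      · intro x hx
        rw [hx, hFhalf, h1]; norm_num
    · intro x y hxy
      show (if x ≤ 1/2 then _ else _) ≤ (if y ≤ 1/2 then _ else _)
      by_cases hx : x ≤ 1/2 <;> by_cases hy : y ≤ 1/2
      · rw [if_pos hx, if_pos hy]
        have := farey_mono hx hy hxy
        linarith [hm this]
      · rw [if_pos hx, if_neg hy]
        have l1 : fhSeq n (fareyMap x) ≤ 1 := by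
          rw [← h1]; exact hm (hFle1_left x hx)
        have l2 : fhSeq n (fareyMap y) ≤ 1 := by
          rw [← h1]; exact hm (hFle1_right y (by push_neg at hy; linarith))
        linarith
      · exact absurd (hxy.trans hy) hx
      · rw [if_neg hx, if_neg hy]
        push_neg at hx hy
        have := farey_anti hx.le hy.le hxy
        linarith [hm this]

lemma fhSeq_zero (n : ℕ) : fhSeq n 0 = 0 := (fhSeq_pkg n).1
lemma fhSeq_one (n : ℕ) : fhSeq n 1 = 1 := (fhSeq_pkg n).2.1
lemma fhSeq_cont (n : ℕ) : Continuous (fhSeq n) := (fhSeq_pkg n).2.2.1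
lemma fhSeq_mono (n : ℕ) : Monotone (fhSeq n) := (fhSeq_pkg n).2.2.2

lemma fhSeq_mem {n : ℕ} {x : ℝ} (hx : x ∈ Set.Icc (0:ℝ) 1) :
    fhSeq n x ∈ Set.Icc (0:ℝ) 1 := by
  constructor
  · rw [← fhSeq_zero n]; exact fhSeq_mono n hx.1
  · rw [← fhSeq_one n]; exact fhSeq_mono n hx.2

lemma fhSeq_conj (n : ℕ) {x : ℝ} (hx : x ∈ Set.Icc (0:ℝ) 1) :
    tentMap (fhSeq (n+1) x) = fhSeq n (fareyMap x) := by
  have hmem : fhSeq n (fareyMap x) ∈ Set.Icc (0:ℝ) 1 := fhSeq_mem (farey_mapsTo hx)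
  by_cases h : x ≤ 1/2
  · have : fhSeq (n+1) x = fhSeq n (fareyMap x) / 2 := by
      show (if x ≤ 1/2 then _ else _) = _; rw [if_pos h]
    rw [this, tentMap, if_pos (by linarith [hmem.2])]
    ring
  · have : fhSeq (n+1) x = 1 - fhSeq n (fareyMap x) / 2 := by
      show (if x ≤ 1/2 then _ else _) = _; rw [if_neg h]
    rw [this]
    rcases eq_or_lt_of_le hmem.2 with he | hlt
    · rw [tentMap, if_pos (by rw [he]; norm_num), he]; norm_num
    · rw [tentMap, if_neg (by push_neg; linarith)]; ring

lemma fhSeq_cauchy_step (n : ℕ) : ∀ x ∈ Set.Icc (0:ℝ) 1,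
    |fhSeq (n+1) x - fhSeq n x| ≤ (1/2)^n := by
  induction n with
  | zero =>
    intro x hx
    have h1 := fhSeq_mem (n := 1) hx
    have h0 := fhSeq_mem (n := 0) hx
    rw [abs_le]
    constructor
    · simp only [pow_zero]; linarith [h1.1, h0.2]
    · simp only [pow_zero]; linarith [h1.2, h0.1]
  | succ n ih =>
    intro x hx
    have hF := farey_mapsTo hx
    have := ih (fareyMap x) hF
    by_cases h : x ≤ 1/2
    · have e1 : fhSeq (n+2) x = fhSeq (n+1) (fareyMap x) / 2 := by
        show (if x ≤ 1/2 then _ else _) = _; rw [if_pos h]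
      have e2 : fhSeq (n+1) x = fhSeq n (fareyMap x) / 2 := by
        show (if x ≤ 1/2 then _ else _) = _; rw [if_pos h]
      rw [e1, e2, div_sub_div_same, abs_div]
      rw [abs_of_nonneg (by norm_num : (0:ℝ) ≤ 2)]
      rw [pow_succ]
      linarith
    · have e1 : fhSeq (n+2) x = 1 - fhSeq (n+1) (fareyMap x) / 2 := by
        show (if x ≤ 1/2 then _ else _) = _; rw [if_neg h]
      have e2 : fhSeq (n+1) x = 1 - fhSeq n (fareyMap x) / 2 := by
        show (if x ≤ 1/2 then _ else _) = _; rw [if_neg h]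
      rw [e1, e2]
      have : (1 - fhSeq (n+1) (fareyMap x) / 2) - (1 - fhSeq n (fareyMap x) / 2)
          = -((fhSeq (n+1) (fareyMap x) - fhSeq n (fareyMap x)) / 2) := by ring
      rw [this, abs_neg, abs_div, abs_of_nonneg (by norm_num : (0:ℝ) ≤ 2), pow_succ]
      linarith

lemma fhSeq_tele (n : ℕ) : ∀ k : ℕ, ∀ x ∈ Set.Icc (0:ℝ) 1,
    |fhSeq (n+k) x - fhSeq n x| ≤ 2 * (1/2)^n - 2 * (1/2)^(n+k) := by
  intro k
  induction k with
  | zero => intro x hx; simp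
  | succ k ih =>
    intro x hx
    have h1 := ih x hx
    have h2 := fhSeq_cauchy_step (n+k) x hx
    have : fhSeq (n+(k+1)) x - fhSeq n x
        = (fhSeq ((n+k)+1) x - fhSeq (n+k) x) + (fhSeq (n+k) x - fhSeq n x) := by
      have : n + (k+1) = (n+k)+1 := by ring
      rw [this]; ring
    rw [this]
    calc |(fhSeq ((n+k)+1) x - fhSeq (n+k) x) + (fhSeq (n+k) x - fhSeq n x)|
        ≤ |fhSeq ((n+k)+1) x - fhSeq (n+k) x| + |fhSeq (n+k) x - fhSeq n x| := abs_add_le _ _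
      _ ≤ (1/2)^(n+k) + (2 * (1/2)^n - 2 * (1/2)^(n+k)) := by linarith
      _ = 2 * (1/2)^n - 2 * (1/2)^(n+(k+1)) := by
          have : (1/2:ℝ)^(n+(k+1)) = (1/2)^(n+k) * (1/2) := by
            rw [← pow_succ]; ring_nf
          rw [this]; ring

lemma fhSeq_cauchySeq {x : ℝ} (hx : x ∈ Set.Icc (0:ℝ) 1) :
    CauchySeq (fun n => fhSeq n x) := by
  apply cauchySeq_of_le_geometric (1/2 : ℝ) 1 (by norm_num)
  intro n
  rw [Real.dist_eq, abs_sub_comm]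
  calc |fhSeq (n+1) x - fhSeq n x| ≤ (1/2)^n := fhSeq_cauchy_step n x hx
    _ = 1 * (1/2)^n := (one_mul _).symm

noncomputable def fhLim : ℝ → ℝ := fun x =>
  if hx : x ∈ Set.Icc (0:ℝ) 1 then
    (cauchySeq_tendsto_of_complete (fhSeq_cauchySeq hx)).choose
  else x

lemma fhLim_tendsto {x : ℝ} (hx : x ∈ Set.Icc (0:ℝ) 1) :
    Filter.Tendsto (fun n => fhSeq n x) Filter.atTop (nhds (fhLim x)) := by
  rw [fhLim, dif_pos hx]
  exact (cauchySeq_tendsto_of_complete (fhSeq_cauchySeq hx)).choose_spec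

lemma fhLim_zero : fhLim 0 = 0 := by
  have h := fhLim_tendsto (by norm_num : (0:ℝ) ∈ Set.Icc (0:ℝ) 1)
  have h2 : Filter.Tendsto (fun n => fhSeq n 0) Filter.atTop (nhds 0) := by
    simp only [fhSeq_zero]; exact tendsto_const_nhds
  exact tendsto_nhds_unique h h2

lemma fhLim_one : fhLim 1 = 1 := by
  have h := fhLim_tendsto (by norm_num : (1:ℝ) ∈ Set.Icc (0:ℝ) 1)
  have h2 : Filter.Tendsto (fun n => fhSeq n 1) Filter.atTop (nhds 1) := by
    simp only [fhSeq_one]; exact tendsto_const_nhds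
  exact tendsto_nhds_unique h h2

lemma fhLim_mem {x : ℝ} (hx : x ∈ Set.Icc (0:ℝ) 1) : fhLim x ∈ Set.Icc (0:ℝ) 1 :=
  isClosed_Icc.mem_of_tendsto (fhLim_tendsto hx)
    (Filter.Eventually.of_forall fun n => fhSeq_mem hx)

lemma fhLim_monoOn : MonotoneOn fhLim (Set.Icc (0:ℝ) 1) := by
  intro x hx y hy hxy
  exact le_of_tendsto_of_tendsto' (fhLim_tendsto hx) (fhLim_tendsto hy)
    (fun n => fhSeq_mono n hxy)

lemma fhLim_conj {x : ℝ} (hx : x ∈ Set.Icc (0:ℝ) 1) :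
    fhLim (fareyMap x) = tentMap (fhLim x) := by
  have hF := farey_mapsTo hx
  have t1 : Filter.Tendsto (fun n => fhSeq n (fareyMap x)) Filter.atTop
      (nhds (fhLim (fareyMap x))) := fhLim_tendsto hF
  have t2 : Filter.Tendsto (fun n => fhSeq (n+1) x) Filter.atTop (nhds (fhLim x)) :=
    (fhLim_tendsto hx).comp (Filter.tendsto_add_atTop_nat 1)
  have t3 : Filter.Tendsto (fun n => tentMap (fhSeq (n+1) x)) Filter.atTop
      (nhds (tentMap (fhLim x))) := (continuous_tentMap.tendsto _).comp t2
  have heq : (fun n => tentMap (fhSeq (n+1) x)) = fun n => fhSeq n (fareyMap x) := by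
    funext n; exact fhSeq_conj n hx
  rw [heq] at t3
  exact tendsto_nhds_unique t1 t3

lemma fhLim_dist {n : ℕ} {x : ℝ} (hx : x ∈ Set.Icc (0:ℝ) 1) :
    dist (fhLim x) (fhSeq n x) ≤ 2 * (1/2)^n := by
  have t : Filter.Tendsto (fun k => dist (fhSeq (n+k) x) (fhSeq n x)) Filter.atTop
      (nhds (dist (fhLim x) (fhSeq n x))) := by
    exact (((fhLim_tendsto hx).comp (Filter.tendsto_add_atTop_nat n)).congr
      (fun k => by simp [Nat.add_comm])).dist tendsto_const_nhds
  apply le_of_tendsto t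
  apply Filter.Eventually.of_forall
  intro k
  rw [Real.dist_eq]
  have := fhSeq_tele n k x hx
  have hp : (0:ℝ) ≤ 2 * (1/2)^(n+k) := by positivity
  linarith

lemma fhLim_contOn : ContinuousOn fhLim (Set.Icc (0:ℝ) 1) := by
  have hU : TendstoUniformlyOn fhSeq fhLim Filter.atTop (Set.Icc (0:ℝ) 1) := by
    rw [Metric.tendstoUniformlyOn_iff]
    intro ε hε
    have hh : Filter.Tendsto (fun n : ℕ => 2 * (1/2:ℝ)^n) Filter.atTop (nhds 0) := by
      have := tendsto_pow_atTop_nhds_zero_of_lt_one (by norm_num : (0:ℝ) ≤ 1/2)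
        (by norm_num : (1/2:ℝ) < 1)
      simpa using this.const_mul 2
    filter_upwards [hh.eventually (eventually_lt_nhds hε)] with n hn x hx
    exact lt_of_le_of_lt (fhLim_dist hx) hn
  exact hU.continuousOn (Filter.Eventually.of_forall fun n => (fhSeq_cont n).continuousOn).frequently

lemma rat_reaches_one : ∀ q : ℕ, ∀ p : ℕ, 0 < p → p ≤ q →
    ∃ n : ℕ, fareyMap^[n] ((p:ℝ)/(q:ℝ)) = 1 := by
  intro q
  induction q using Nat.strong_induction_on with
  | _ q ih =>
    intro p hp hpq
    have hq : 0 < q := lt_of_lt_of_le hp hpq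
    have hqR : (0:ℝ) < q := by exact_mod_cast hq
    have hpR : (0:ℝ) < p := by exact_mod_cast hp
    rcases eq_or_lt_of_le hpq with he | hlt
    · refine ⟨0, ?_⟩
      simp [he, div_self (ne_of_gt hqR)]
    · have hltR : (p:ℝ) < q := by exact_mod_cast hlt
      by_cases h2 : 2 * p ≤ q
      · -- left branch : F(p/q) = p/(q-p)
        have hhalf : (p:ℝ)/q ≤ 1/2 := by
          rw [div_le_div_iff₀ hqR (by norm_num : (0:ℝ) < 2)]
          have : (2:ℝ) * p ≤ q := by exact_mod_cast h2
          linarith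
        have h2R : (2:ℝ) * p ≤ q := by exact_mod_cast h2
        have hsub : ((q - p : ℕ) : ℝ) = (q:ℝ) - p := by
          push_cast [Nat.cast_sub hpq]; ring
        have hstep : fareyMap ((p:ℝ)/q) = (p:ℝ)/(((q - p : ℕ)) : ℝ) := by
          rw [farey_left hhalf, hsub]
          have hne : (q:ℝ) - p ≠ 0 := by linarith
          field_simp
        obtain ⟨n, hn⟩ := ih (q - p) (by omega) p hp (by omega)
        exact ⟨n + 1, by rw [Function.iterate_succ_apply, hstep, hn]⟩
      · -- right branch : F(p/q) = (q-p)/p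
        push_neg at h2
        have h2R : (q:ℝ) < 2 * p := by exact_mod_cast h2
        have hhalf : (1:ℝ)/2 ≤ (p:ℝ)/q := by
          rw [div_le_div_iff₀ (by norm_num : (0:ℝ) < 2) hqR]
          linarith
        have hsub : ((q - p : ℕ) : ℝ) = (q:ℝ) - p := by
          push_cast [Nat.cast_sub hpq]; ring
        have hstep : fareyMap ((p:ℝ)/q) = (((q - p : ℕ)) : ℝ)/(p:ℝ) := by
          rw [farey_right hhalf, hsub]
          field_simp
        obtain ⟨n, hn⟩ := ih p hlt (q - p) (by omega) (by omega)
        exact ⟨n + 1, by rw [Function.iterate_succ_apply, hstep, hn]⟩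

lemma dense_pre_one {a b : ℝ} (ha : 0 ≤ a) (hab : a < b) (hb : b ≤ 1) :
    ∃ x : ℝ, a < x ∧ x < b ∧ ∃ n : ℕ, fareyMap^[n] x = 1 := by
  obtain ⟨r, hr1, hr2⟩ := exists_rat_btwn hab
  have hr0 : (0:ℝ) < (r:ℝ) := lt_of_le_of_lt ha hr1
  have hr0' : 0 < r := by exact_mod_cast hr0
  have hrle : (r:ℝ) ≤ 1 := le_of_lt (lt_of_lt_of_le hr2 hb)
  refine ⟨(r:ℝ), hr1, hr2, ?_⟩
  have hnum : 0 < r.num := Rat.num_pos.mpr hr0'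
  have hcast : (r:ℝ) = (r.num.toNat : ℝ) / (r.den : ℝ) := by
    rw [Rat.cast_def]
    congr 1
    norm_cast
    omega
  have hden : (0:ℝ) < (r.den:ℝ) := by exact_mod_cast r.pos
  have hle : r.num.toNat ≤ r.den := by
    have : (r.num.toNat : ℝ) ≤ (r.den : ℝ) := by
      rw [hcast] at hrle
      rw [div_le_one hden] at hrle
      exact hrle
    exact_mod_cast this
  obtain ⟨n, hn⟩ := rat_reaches_one r.den r.num.toNat (by omega) hle
  rw [hcast]
  exact ⟨n, hn⟩

lemma farey_image_step {u v : ℝ} (huv : u < v) (hsub : Set.Icc u v ⊆ Set.Icc (0:ℝ) 1) :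
    ∃ u' v', u' < v' ∧ Set.Icc u' v' ⊆ fareyMap '' (Set.Icc u v) ∧
      Set.Icc u' v' ⊆ Set.Icc (0:ℝ) 1 := by
  have hu : (0:ℝ) ≤ u := (hsub (Set.left_mem_Icc.mpr huv.le)).1
  have hv : v ≤ 1 := (hsub (Set.right_mem_Icc.mpr huv.le)).2
  rcases lt_or_ge u (1/2) with hcase | hcase
  · -- left branch on [u, min v (1/2)]
    set w := min v (1/2) with hw
    have huw : u < w := lt_min huv hcase
    have hw2 : w ≤ 1/2 := min_le_right _ _
    have hwv : w ≤ v := min_le_left _ _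
    have hu2 : (0:ℝ) < 1 - u := by linarith
    have hw2' : (0:ℝ) < 1 - w := by linarith
    refine ⟨u/(1-u), w/(1-w), ?_, ?_, ?_⟩
    · rw [div_lt_div_iff₀ hu2 hw2']; nlinarith
    · rintro y ⟨hy1, hy2⟩
      have hy0 : 0 ≤ y := le_trans (by positivity) hy1
      have hy1' : y ≤ 1 := by
        have : w/(1-w) ≤ 1 := by rw [div_le_one hw2']; linarith
        linarith
      have h1y : (0:ℝ) < 1 + y := by linarith
      rw [div_le_iff₀ hu2] at hy1
      rw [le_div_iff₀ hw2'] at hy2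
      refine ⟨y/(1+y), ⟨?_, ?_⟩, ?_⟩
      · rw [le_div_iff₀ h1y]; nlinarith
      · have : y/(1+y) ≤ w := by rw [div_le_iff₀ h1y]; nlinarith
        linarith [hwv]
      · have ht : y/(1+y) ≤ 1/2 := by rw [div_le_div_iff₀ h1y (by norm_num : (0:ℝ)<2)]; linarith
        rw [farey_left ht]
        have hrw : 1 - y/(1+y) = 1/(1+y) := by field_simp; ring
        have h1y' : (1:ℝ) + y ≠ 0 := ne_of_gt h1y
        rw [hrw]
        field_simp
    · rintro y ⟨hy1, hy2⟩
      constructor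
      · exact le_trans (by positivity) hy1
      · have : w/(1-w) ≤ 1 := by rw [div_le_one hw2']; linarith
        linarith
  · -- right branch on [u, v] ⊆ [1/2, 1]
    have hu0 : (0:ℝ) < u := by linarith
    have hv0 : (0:ℝ) < v := by linarith
    refine ⟨(1-v)/v, (1-u)/u, ?_, ?_, ?_⟩
    · rw [div_lt_div_iff₀ hv0 hu0]; nlinarith
    · rintro y ⟨hy1, hy2⟩
      have hy0 : 0 ≤ y := le_trans (by apply div_nonneg <;> linarith) hy1
      have hy1' : y ≤ 1 := by
        have : (1-u)/u ≤ 1 := by rw [div_le_one hu0]; linarith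
        linarith
      have h1y : (0:ℝ) < 1 + y := by linarith
      rw [div_le_iff₀ hv0] at hy1
      rw [le_div_iff₀ hu0] at hy2
      refine ⟨1/(1+y), ⟨?_, ?_⟩, ?_⟩
      · rw [le_div_iff₀ h1y]; nlinarith
      · rw [div_le_iff₀ h1y]; nlinarith
      · have ht : (1:ℝ)/2 ≤ 1/(1+y) := by
          rw [div_le_div_iff₀ (by norm_num : (0:ℝ)<2) h1y]; linarith
        rw [farey_right ht]
        rw [div_eq_iff (by positivity : (1:ℝ)/(1+y) ≠ 0)]
        field_simp; ring
    · rintro y ⟨hy1, hy2⟩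
      constructor
      · exact le_trans (by apply div_nonneg <;> linarith) hy1
      · have : (1-u)/u ≤ 1 := by rw [div_le_one hu0]; linarith
        linarith

lemma farey_image_iter {a b : ℝ} (hab : a < b) (hsub : Set.Icc a b ⊆ Set.Icc (0:ℝ) 1) :
    ∀ m : ℕ, ∃ u v, u < v ∧ Set.Icc u v ⊆ (fareyMap^[m]) '' (Set.Icc a b) ∧
      Set.Icc u v ⊆ Set.Icc (0:ℝ) 1 := by
  intro m
  induction m with
  | zero => exact ⟨a, b, hab, by simp, hsub⟩
  | succ m ih =>
    obtain ⟨u, v, huv, him, hsub'⟩ := ih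
    obtain ⟨u', v', huv', him', hsub''⟩ := farey_image_step huv hsub'
    refine ⟨u', v', huv', ?_, hsub''⟩
    intro y hy
    obtain ⟨t, ht, hft⟩ := him' hy
    obtain ⟨s, hs, hfs⟩ := him ht
    exact ⟨s, hs, by rw [Function.iterate_succ_apply', hfs, hft]⟩

lemma fhLim_const_image {a b : ℝ} (hab : a ≤ b) (hsub : Set.Icc a b ⊆ Set.Icc (0:ℝ) 1)
    (c : ℝ) (hc : ∀ x ∈ Set.Icc a b, fhLim x = c) :
    ∀ m : ℕ, ∃ cm : ℝ, (∀ y ∈ (fareyMap^[m]) '' (Set.Icc a b), fhLim y = cm) := by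
  intro m
  induction m with
  | zero => exact ⟨c, by simpa using hc⟩
  | succ m ih =>
    obtain ⟨cm, hcm⟩ := ih
    refine ⟨tentMap cm, ?_⟩
    rintro y ⟨s, hs, hfs⟩
    have hsm : fareyMap^[m] s ∈ (fareyMap^[m]) '' (Set.Icc a b) := ⟨s, hs, rfl⟩
    have hmem : fareyMap^[m] s ∈ Set.Icc (0:ℝ) 1 := by
      clear hfs hsm hcm
      induction m with
      | zero => exact hsub hs
      | succ m ih2 => rw [Function.iterate_succ_apply']; exact farey_mapsTo ih2
    rw [← hfs, Function.iterate_succ_apply', fhLim_conj hmem, hcm _ hsm]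

/-- escape lemma: if `fhLim` vanishes at some positive point, contradiction. -/
lemma fhLim_not_zero {δ : ℝ} (h0 : 0 < δ) (h1 : δ ≤ 1) (hz : fhLim δ = 0) : False := by
  set S : Set ℝ := {t : ℝ | 0 < t ∧ t ≤ 1 ∧ fhLim t = 0} with hS
  have hδS : δ ∈ S := ⟨h0, h1, hz⟩
  have hstep : ∀ t ∈ S, t ≤ 1/2 → fareyMap t ∈ S ∧ t + t^2 ≤ fareyMap t := by
    rintro t ⟨ht0, ht1, htz⟩ ht2
    have hmem : t ∈ Set.Icc (0:ℝ) 1 := ⟨ht0.le, ht1⟩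
    have hF : fareyMap t = t/(1-t) := farey_left ht2
    have h1t : (0:ℝ) < 1 - t := by linarith
    refine ⟨⟨by rw [hF]; positivity, ?_, ?_⟩, ?_⟩
    · rw [hF, div_le_one h1t]; linarith
    · rw [fhLim_conj hmem, htz, tentMap, if_pos (by norm_num)]; ring
    · rw [hF, le_div_iff₀ h1t]; nlinarith
  -- get an element of S above 1/2
  have hgrow : ∀ m : ℕ, ∃ t ∈ S, (1/2 < t) ∨ (δ ≤ t ∧ δ + m * δ^2 ≤ t) := by
    intro m
    induction m with
    | zero => exact ⟨δ, hδS, Or.inr ⟨le_rfl, by simp⟩⟩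
    | succ m ih =>
      obtain ⟨t, htS, hcase⟩ := ih
      rcases hcase with hbig | ⟨hge, hsum⟩
      · exact ⟨t, htS, Or.inl hbig⟩
      · rcases lt_or_ge (1/2 : ℝ) t with hbig | hsmall
        · exact ⟨t, htS, Or.inl hbig⟩
        · obtain ⟨hFS, hFge⟩ := hstep t htS hsmall
          refine ⟨fareyMap t, hFS, Or.inr ⟨by nlinarith, ?_⟩⟩
          have : δ^2 ≤ t^2 := by nlinarith
          push_cast
          nlinarith
  obtain ⟨m, hm⟩ := exists_nat_gt ((1/2) / δ^2)
  obtain ⟨t, htS, hcase⟩ := hgrow m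
  have hbig : 1/2 < t := by
    rcases hcase with h | ⟨_, h⟩
    · exact h
    · have : (1/2 : ℝ) < m * δ^2 := by
        rw [div_lt_iff₀ (by positivity)] at hm; linarith [hm]
      linarith
  -- now fhLim (1/2) = 0, hence fhLim 1 = 0, contradiction
  obtain ⟨ht0, ht1, htz⟩ := htS
  have hhalfmem : (1/2 : ℝ) ∈ Set.Icc (0:ℝ) 1 := by norm_num
  have hhalf : fhLim (1/2 : ℝ) = 0 := by
    have hle : fhLim (1/2:ℝ) ≤ fhLim t :=
      fhLim_monoOn hhalfmem ⟨ht0.le, ht1⟩ hbig.le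
    have hge : 0 ≤ fhLim (1/2:ℝ) := (fhLim_mem hhalfmem).1
    rw [htz] at hle; linarith
  have : fhLim 1 = 0 := by
    have hF : fareyMap (1/2:ℝ) = 1 := by rw [farey_left le_rfl]; norm_num
    have := fhLim_conj hhalfmem
    rw [hF, hhalf] at this
    rw [this, tentMap, if_pos (by norm_num)]; ring
  rw [fhLim_one] at this
  norm_num at this

lemma fhLim_not_one {d : ℝ} (hd0 : 0 ≤ d) (hd1 : d < 1) (ho : fhLim d = 1) : False := by
  rcases le_or_gt d (1/2) with hle | hgt
  · -- fhLim (1/2) = 1, so fhLim 1 = tent 1 = 0, contra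
    have hhalfmem : (1/2 : ℝ) ∈ Set.Icc (0:ℝ) 1 := by norm_num
    have h1 : fhLim (1/2:ℝ) = 1 := by
      have hle' : fhLim d ≤ fhLim (1/2:ℝ) := fhLim_monoOn ⟨hd0, by linarith⟩ hhalfmem hle
      have := (fhLim_mem hhalfmem).2
      rw [ho] at hle'; linarith
    have hF : fareyMap (1/2:ℝ) = 1 := by rw [farey_left le_rfl]; norm_num
    have hc := fhLim_conj hhalfmem
    rw [hF, h1, tentMap, if_neg (by norm_num), fhLim_one] at hc
    norm_num at hc
  · -- apply conjugacy at d : fhLim (F d) = tent 1 = 0 with F d > 0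
    have hdmem : d ∈ Set.Icc (0:ℝ) 1 := ⟨hd0, hd1.le⟩
    have hc := fhLim_conj hdmem
    rw [ho, tentMap, if_neg (by norm_num)] at hc
    have hF : fareyMap d = (1-d)/d := farey_right hgt.le
    have hd0' : (0:ℝ) < d := by linarith
    have hFpos : 0 < fareyMap d := by rw [hF]; apply div_pos <;> linarith
    have hFle : fareyMap d ≤ 1 := by rw [hF, div_le_one hd0']; linarith
    exact fhLim_not_zero hFpos hFle (by rw [hc]; ring)

lemma fhLim_injOn : Set.InjOn fhLim (Set.Icc (0:ℝ) 1) := by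
  have key : ∀ a b : ℝ, a ∈ Set.Icc (0:ℝ) 1 → b ∈ Set.Icc (0:ℝ) 1 → a < b →
      fhLim a = fhLim b → False := by
    intro a b ha hb hab heq
    have hsub : Set.Icc a b ⊆ Set.Icc (0:ℝ) 1 := Set.Icc_subset_Icc ha.1 hb.2
    have hconst : ∀ x ∈ Set.Icc a b, fhLim x = fhLim a := by
      intro x hx
      have h1 : fhLim a ≤ fhLim x := fhLim_monoOn ha (hsub hx) hx.1
      have h2 : fhLim x ≤ fhLim b := fhLim_monoOn (hsub hx) hb hx.2
      rw [← heq] at h2; linarith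
    obtain ⟨x, hax, hxb, n, hxn⟩ := dense_pre_one ha.1 hab hb.2
    obtain ⟨cm, hcm⟩ := fhLim_const_image hab.le hsub (fhLim a) hconst n
    have h1mem : (1:ℝ) ∈ (fareyMap^[n]) '' (Set.Icc a b) :=
      ⟨x, ⟨hax.le, hxb.le⟩, hxn⟩
    have hcm1 : cm = 1 := by rw [← hcm 1 h1mem, fhLim_one]
    obtain ⟨u, v, huv, him, hsub'⟩ := farey_image_iter hab hsub n
    have hu1 : fhLim u = 1 := by
      rw [hcm u (him (Set.left_mem_Icc.mpr huv.le)), hcm1]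
    have hu0 : 0 ≤ u := (hsub' (Set.left_mem_Icc.mpr huv.le)).1
    have hult : u < 1 := lt_of_lt_of_le huv (hsub' (Set.right_mem_Icc.mpr huv.le)).2
    exact fhLim_not_one hu0 hult hu1
  intro a ha b hb heq
  rcases lt_trichotomy a b with h | h | h
  · exact absurd (key a b ha hb h heq) not_false
  · exact h
  · exact absurd (key b a hb ha h heq.symm) not_false

lemma fhLim_surjOn : Set.Icc (0:ℝ) 1 ⊆ fhLim '' (Set.Icc (0:ℝ) 1) := by
  have := intermediate_value_Icc (by norm_num : (0:ℝ) ≤ 1) fhLim_contOn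
  rw [fhLim_zero, fhLim_one] at this
  exact this

noncomputable def fgInv : ℝ → ℝ := fun y =>
  if hy : y ∈ Set.Icc (0:ℝ) 1 then (fhLim_surjOn hy).choose else y

lemma fgInv_spec {y : ℝ} (hy : y ∈ Set.Icc (0:ℝ) 1) :
    fgInv y ∈ Set.Icc (0:ℝ) 1 ∧ fhLim (fgInv y) = y := by
  rw [fgInv, dif_pos hy]
  exact ⟨(fhLim_surjOn hy).choose_spec.1, (fhLim_surjOn hy).choose_spec.2⟩

lemma fgInv_left {x : ℝ} (hx : x ∈ Set.Icc (0:ℝ) 1) : fgInv (fhLim x) = x := by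
  have hmem := fhLim_mem hx
  obtain ⟨h1, h2⟩ := fgInv_spec hmem
  exact fhLim_injOn h1 hx h2

lemma fgInv_mono : Monotone fgInv := by
  intro y y' hyy'
  by_cases hy : y ∈ Set.Icc (0:ℝ) 1 <;> by_cases hy' : y' ∈ Set.Icc (0:ℝ) 1
  · obtain ⟨hm, he⟩ := fgInv_spec hy
    obtain ⟨hm', he'⟩ := fgInv_spec hy'
    by_contra hlt
    push_neg at hlt
    have := fhLim_monoOn hm' hm hlt.le
    rw [he, he'] at this
    have : y = y' := le_antisymm hyy' this
    rw [this] at hlt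
    exact absurd rfl (ne_of_gt hlt)
  · -- y ∈ Icc, y' ∉ Icc: y' > 1 (since y' ≥ y ≥ 0)
    obtain ⟨hm, _⟩ := fgInv_spec hy
    have hy'1 : 1 < y' := by
      simp only [Set.mem_Icc, not_and, not_le] at hy'
      rcases lt_or_ge y' 0 with h | h
      · linarith [hy.1]
      · exact hy' h
    have : fgInv y' = y' := by rw [fgInv, dif_neg hy']
    rw [this]
    linarith [hm.2]
  · -- y ∉ Icc, y' ∈ Icc: y < 0
    obtain ⟨hm', _⟩ := fgInv_spec hy'
    have hy0 : y < 0 := by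
      simp only [Set.mem_Icc, not_and, not_le] at hy
      rcases lt_or_ge y 0 with h | h
      · exact h
      · linarith [hy h, hy'.2]
    have : fgInv y = y := by rw [fgInv, dif_neg hy]
    rw [this]
    linarith [hm'.1]
  · -- both outside
    have e1 : fgInv y = y := by rw [fgInv, dif_neg hy]
    have e2 : fgInv y' = y' := by rw [fgInv, dif_neg hy']
    rw [e1, e2]
    exact hyy'

lemma fgInv_surj : Function.Surjective fgInv := by
  intro x
  by_cases hx : x ∈ Set.Icc (0:ℝ) 1
  · exact ⟨fhLim x, fgInv_left hx⟩
  · exact ⟨x, by rw [fgInv, dif_neg hx]⟩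

/-- The Farey map is topologically conjugate to the tent map: there is a homeomorphism
`h : [0,1] → [0,1]` (given with its continuous inverse `g`) fixing `0` and `1` with
`h ∘ F = Tent ∘ h` on `[0,1]`. -/
theorem fareyMap_topologically_conjugate_tentMap :
    ∃ h g : ℝ → ℝ,
      ContinuousOn h (Set.Icc (0 : ℝ) 1) ∧ ContinuousOn g (Set.Icc (0 : ℝ) 1) ∧
      Set.MapsTo h (Set.Icc (0 : ℝ) 1) (Set.Icc (0 : ℝ) 1) ∧
      Set.MapsTo g (Set.Icc (0 : ℝ) 1) (Set.Icc (0 : ℝ) 1) ∧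
      (∀ x ∈ Set.Icc (0 : ℝ) 1, g (h x) = x) ∧
      (∀ y ∈ Set.Icc (0 : ℝ) 1, h (g y) = y) ∧
      h 0 = 0 ∧ h 1 = 1 ∧
      (∀ x ∈ Set.Icc (0 : ℝ) 1, h (fareyMap x) = tentMap (h x)) := by
  refine ⟨fhLim, fgInv, fhLim_contOn, ?_, fun x hx => fhLim_mem hx,
    fun y hy => (fgInv_spec hy).1, fun x hx => fgInv_left hx,
    fun y hy => (fgInv_spec hy).2, fhLim_zero, fhLim_one,
    fun x hx => fhLim_conj hx⟩
  exact (fgInv_mono.continuous_of_surjective fgInv_surj).continuousOn
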